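/- Let K = F_q(x) and let p(x) ∈ F_q[x] be monic irreducible of degree d. In the cyclotomic function field F = K(Λ_{p(x)}), the Galois group Gal(F/K) is isomorphic to the unit group (F_q[x]/(p(x)))^*, which is cyclic of order q^d - 1. -/

import Mathlib

/-- The Carlitz module action `ρ_{p(x)}` on a field `L` containing `F_q(x)`:
`ρ_x(z) = z^q + x·z`, `ρ_{x^i}(z) = ρ_x(ρ_{x^{i-1}}(z))`, and
`ρ_{p(x)}(z) = ∑ a_i ρ_{x^i}(z)` for `p(x) = ∑ a_i x^i`. -/
noncomputable def carlitzAct (Fq : Type*) [Field Fq] [Fintype Fq]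
    {L : Type*} [Field L] [Algebra (RatFunc Fq) L]
    (p : Polynomial Fq) (z : L) : L :=
  ∑ i ∈ Finset.range (p.natDegree + 1),
    algebraMap (RatFunc Fq) L (RatFunc.C (p.coeff i)) *
      ((fun w : L => w ^ (Fintype.card Fq) + algebraMap (RatFunc Fq) L RatFunc.X * w)^[i] z)

/-- The cyclotomic function field `K(Λ_{p(x)})`, `K = F_q(x)`: the subfield of an
algebraic closure of `K` generated over `K` by the `p(x)`-torsion of the Carlitz
module. -/
noncomputable def cyclotomicFunctionField (Fq : Type*) [Field Fq] [Fintype Fq]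
    (p : Polynomial Fq) :
    IntermediateField (RatFunc Fq) (AlgebraicClosure (RatFunc Fq)) :=
  IntermediateField.adjoin (RatFunc Fq)
    {α : AlgebraicClosure (RatFunc Fq) | carlitzAct Fq p α = 0}


open Polynomial

namespace CFF

variable (Fq : Type*) [Field Fq] [Fintype Fq]

local notation "q" => Fintype.card Fq

/-- coefficients of the Carlitz polynomial ρ_{x^i}: `ρ_{x^i}(z) = ∑_j Dc i j • z^{q^j}`. -/
noncomputable def Dc : ℕ → ℕ → Polynomial Fq
  | 0, 0 => 1
  | 0, _+1 => 0
  | i+1, 0 => Polynomial.X * Dc i 0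
  | i+1, j+1 => (Dc i j)^q + Polynomial.X * Dc i (j+1)

variable {Fq}

lemma Dc_zero_zero : Dc Fq 0 0 = 1 := rfl
lemma Dc_zero_succ (j : ℕ) : Dc Fq 0 (j+1) = 0 := rfl
lemma Dc_succ_zero (i : ℕ) : Dc Fq (i+1) 0 = Polynomial.X * Dc Fq i 0 := rfl
lemma Dc_succ_succ (i j : ℕ) :
    Dc Fq (i+1) (j+1) = (Dc Fq i j)^q + Polynomial.X * Dc Fq i (j+1) := rfl

lemma Dc_eq_zero : ∀ i j : ℕ, i < j → Dc Fq i j = 0 := by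
  intro i
  induction i with
  | zero => intro j hj; match j, hj with | j+1, _ => rfl
  | succ i ih =>
    intro j hj
    match j, hj with
    | j+1, hj =>
      rw [Dc_succ_succ, ih j (by omega), ih (j+1) (by omega)]
      simp

lemma Dc_diag (i : ℕ) : Dc Fq i i = 1 := by
  induction i with
  | zero => rfl
  | succ i ih => rw [Dc_succ_succ, ih, Dc_eq_zero i (i+1) (by omega)]; simp

lemma Dc_right_zero (i : ℕ) : Dc Fq i 0 = Polynomial.X ^ i := by
  induction i with
  | zero => rfl
  | succ i ih => rw [Dc_succ_zero, ih, pow_succ, mul_comm]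

end CFF

namespace CFF
variable {Fq : Type*} [Field Fq] [Fintype Fq]
local notation "q" => Fintype.card Fq

/-- Freshman's dream for exponent `q` in any ring receiving `Fq`. -/
lemma add_pow_q {R : Type*} [CommSemiring R] (f : Fq →+* R)
    (hf : Function.Injective f) (u v : R) : (u + v) ^ q = u ^ q + v ^ q := by
  have hp : CharP Fq (ringChar Fq) := ringChar.charP Fq
  obtain ⟨n, hn, hcard⟩ := FiniteField.card Fq (ringChar Fq)
  haveI : CharP R (ringChar Fq) := charP_of_injective_ringHom hf _
  haveI : Fact (Nat.Prime (ringChar Fq)) := ⟨hn⟩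
  rw [hcard]
  exact add_pow_char_pow ..

lemma sum_pow_q {R : Type*} [CommSemiring R] (f : Fq →+* R)
    (hf : Function.Injective f) {ι : Type*} (s : Finset ι) (g : ι → R) :
    (∑ i ∈ s, g i) ^ q = ∑ i ∈ s, (g i) ^ q := by
  have hp : CharP Fq (ringChar Fq) := ringChar.charP Fq
  obtain ⟨n, hn, hcard⟩ := FiniteField.card Fq (ringChar Fq)
  haveI : CharP R (ringChar Fq) := charP_of_injective_ringHom hf _
  haveI : Fact (Nat.Prime (ringChar Fq)) := ⟨hn⟩
  rw [hcard]
  exact sum_pow_char_pow ..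

lemma one_lt_q : 1 < q := Fintype.one_lt_card

/-- The key commutation identity `ρ_x ∘ ρ_{x^i} = ρ_{x^i} ∘ ρ_x` at the level of
coefficients. -/
lemma Dc_comm : ∀ i j : ℕ,
    (Dc Fq i j) ^ q + Polynomial.X * Dc Fq i (j+1)
      = Dc Fq i j + Polynomial.X ^ (q ^ (j+1)) * Dc Fq i (j+1) := by
  have hCinj : Function.Injective (Polynomial.C : Fq →+* Polynomial Fq) :=
    Polynomial.C_injective
  intro i
  induction i with
  | zero =>
    intro j
    cases j with
    | zero => simp [Dc_zero_zero, Dc_zero_succ]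
    | succ j => simp [Dc_zero_succ]
  | succ i ih =>
    intro j
    cases j with
    | zero =>
      have h0 := ih 0
      rw [Dc_succ_zero, Dc_succ_succ, mul_pow]
      rw [pow_one] at h0 ⊢
      linear_combination (Polynomial.X : Polynomial Fq) * h0
    | succ j =>
      have ihj := ih j
      have ihj1 := ih (j+1)
      have key := congrArg (· ^ q) ihj
      rw [add_pow_q Polynomial.C hCinj, add_pow_q Polynomial.C hCinj, mul_pow, mul_pow,
        ← pow_mul, ← pow_mul, ← pow_succ] at key
      rw [Dc_succ_succ, Dc_succ_succ, add_pow_q Polynomial.C hCinj, mul_pow]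
      linear_combination key + (Polynomial.X : Polynomial Fq) * ihj1

end CFF

namespace CFF
variable {Fq : Type*} [Field Fq] [Fintype Fq]
local notation "q" => Fintype.card Fq

variable (Fq) in
/-- `carlCoeff p j` is the coefficient of `z^{q^j}` in the Carlitz polynomial `ρ_p(z)`. -/
noncomputable def carlCoeff (p : Polynomial Fq) (j : ℕ) : Polynomial Fq :=
  ∑ i ∈ Finset.range (p.natDegree + 1), Polynomial.C (p.coeff i) * Dc Fq i j

lemma carlCoeff_zero (p : Polynomial Fq) : carlCoeff Fq p 0 = p := by
  unfold carlCoeff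
  conv_rhs => rw [p.as_sum_range' (p.natDegree + 1) (Nat.lt_succ_self _)]
  refine Finset.sum_congr rfl fun i _ => ?_
  rw [Dc_right_zero, Polynomial.C_mul_X_pow_eq_monomial]

lemma carlCoeff_eq_zero {p : Polynomial Fq} {j : ℕ} (h : p.natDegree < j) :
    carlCoeff Fq p j = 0 := by
  unfold carlCoeff
  refine Finset.sum_eq_zero fun i hi => ?_
  rw [Dc_eq_zero i j (by simp at hi; omega), mul_zero]

lemma carlCoeff_natDegree {p : Polynomial Fq} (hm : p.Monic) :
    carlCoeff Fq p p.natDegree = 1 := by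
  unfold carlCoeff
  rw [Finset.sum_range_succ, Dc_diag, Finset.sum_eq_zero, hm.coeff_natDegree]
  · simp
  · intro i hi
    rw [Dc_eq_zero i p.natDegree (by simp at hi; omega), mul_zero]

lemma carlCoeff_comm (p : Polynomial Fq) (j : ℕ) :
    (carlCoeff Fq p j) ^ q + Polynomial.X * carlCoeff Fq p (j+1)
      = carlCoeff Fq p j + Polynomial.X ^ (q ^ (j+1)) * carlCoeff Fq p (j+1) := by
  unfold carlCoeff
  rw [sum_pow_q Polynomial.C Polynomial.C_injective, Finset.mul_sum, Finset.mul_sum,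
    ← Finset.sum_add_distrib, ← Finset.sum_add_distrib]
  refine Finset.sum_congr rfl fun i _ => ?_
  rw [mul_pow, ← Polynomial.C_pow, FiniteField.pow_card]
  linear_combination Polynomial.C (p.coeff i) * Dc_comm (Fq := Fq) i j

end CFF

namespace CFF
variable {Fq : Type*} [Field Fq] [Fintype Fq]
local notation "q" => Fintype.card Fq

lemma card_adjoinRoot {p : Polynomial Fq} (hirr : Irreducible p)
    [Fintype (AdjoinRoot p)] : Fintype.card (AdjoinRoot p) = q ^ p.natDegree := by
  rw [Module.card_fintype (AdjoinRoot.powerBasis hirr.ne_zero).basis]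
  simp [AdjoinRoot.powerBasis]
  exact congrArg _ (Fintype.card_fin _)

lemma not_dvd_X_pow_card_sub_X {p : Polynomial Fq} (hirr : Irreducible p)
    {m : ℕ} (hm0 : 0 < m) (hmd : m < p.natDegree) :
    ¬ p ∣ (Polynomial.X ^ (q ^ m) - Polynomial.X) := by
  haveI : Fact (Irreducible p) := ⟨hirr⟩
  intro hdvd
  haveI : Fintype (AdjoinRoot p) :=
    Module.fintypeOfFintype (AdjoinRoot.powerBasis hirr.ne_zero).basis
  have hcard := card_adjoinRoot hirr
  -- the root is fixed by the `q^m`-power map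
  have hroot : (AdjoinRoot.root p) ^ (q ^ m) = AdjoinRoot.root p := by
    have h0 : (AdjoinRoot.mk p) (Polynomial.X ^ (q ^ m) - Polynomial.X) = 0 :=
      AdjoinRoot.mk_eq_zero.mpr hdvd
    rw [map_sub, map_pow, AdjoinRoot.mk_X, sub_eq_zero] at h0
    exact h0
  -- charP setup
  have hp : CharP Fq (ringChar Fq) := ringChar.charP Fq
  obtain ⟨n, hn, hq⟩ := FiniteField.card Fq (ringChar Fq)
  haveI : Fact (Nat.Prime (ringChar Fq)) := ⟨hn⟩
  haveI : CharP (AdjoinRoot p) (ringChar Fq) :=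
    charP_of_injective_algebraMap (algebraMap Fq (AdjoinRoot p)).injective _
  haveI : ExpChar (AdjoinRoot p) (ringChar Fq) := ExpChar.prime hn
  have hqm : q ^ m = (ringChar Fq) ^ (n * m) := by rw [hq, ← pow_mul]
  -- the `q^m`-power map is an `Fq`-algebra endomorphism
  set φ : (AdjoinRoot p) →ₐ[Fq] (AdjoinRoot p) :=
    { toRingHom := iterateFrobenius (AdjoinRoot p) (ringChar Fq) (n * m)
      commutes' := fun c => by
        show iterateFrobenius (AdjoinRoot p) (ringChar Fq) (↑n * m) _ = _
        rw [iterateFrobenius_def, ← map_pow, ← hqm, FiniteField.pow_card_pow] } with hφ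
  have hφr : φ (AdjoinRoot.root p) = AdjoinRoot.root p := by
    show iterateFrobenius (AdjoinRoot p) (ringChar Fq) (n * m) (AdjoinRoot.root p) = _
    rw [iterateFrobenius_def, ← hqm, hroot]
  have hφ_id : φ = AlgHom.id Fq (AdjoinRoot p) := AdjoinRoot.algHom_ext (by rw [hφr]; rfl)
  have hfix : ∀ z : (AdjoinRoot p), z ^ (q ^ m) = z := by
    intro z
    have h2 : iterateFrobenius (AdjoinRoot p) (ringChar Fq) (↑n * m) z = z :=
      DFunLike.congr_fun hφ_id z
    rwa [iterateFrobenius_def, ← hqm] at h2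
  -- contradiction by counting roots of X^{q^m} - X over (AdjoinRoot p)
  have hone : (1:ℕ) < q := Fintype.one_lt_card
  set g : Polynomial (AdjoinRoot p) := Polynomial.X ^ (q ^ m) - Polynomial.X with hg
  have hgdeg : g.natDegree = q ^ m :=
    FiniteField.X_pow_card_pow_sub_X_natDegree_eq (AdjoinRoot p) hm0.ne' hone
  have hgne : g ≠ 0 := FiniteField.X_pow_card_pow_sub_X_ne_zero (AdjoinRoot p) hm0.ne' hone
  have hsub : (Finset.univ : Finset (AdjoinRoot p)) ⊆ g.roots.toFinset := by
    intro z _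
    rw [Multiset.mem_toFinset, Polynomial.mem_roots hgne]
    simp [Polynomial.IsRoot, hg, hfix z]
  have : Fintype.card (AdjoinRoot p) ≤ q ^ m := by
    calc Fintype.card (AdjoinRoot p) = (Finset.univ : Finset (AdjoinRoot p)).card := rfl
      _ ≤ g.roots.toFinset.card := Finset.card_le_card hsub
      _ ≤ Multiset.card g.roots := g.roots.toFinset_card_le
      _ ≤ g.natDegree := g.card_roots'
      _ = q ^ m := hgdeg
  rw [hcard] at this
  exact absurd this (not_le.mpr (Nat.pow_lt_pow_right hone hmd))

lemma dvd_carlCoeff {p : Polynomial Fq} (hirr : Irreducible p)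
    {j : ℕ} (hj : j < p.natDegree) : p ∣ carlCoeff Fq p j := by
  induction j with
  | zero => rw [carlCoeff_zero]
  | succ j ih =>
    have hdvd : p ∣ (Polynomial.X ^ (q ^ (j+1)) - Polynomial.X) * carlCoeff Fq p (j+1) := by
      have h := carlCoeff_comm p j
      have hj' : p ∣ carlCoeff Fq p j := ih (by omega)
      have : (Polynomial.X ^ (q ^ (j+1)) - Polynomial.X) * carlCoeff Fq p (j+1)
          = (carlCoeff Fq p j)^q - carlCoeff Fq p j := by linear_combination -h
      rw [this]
      exact dvd_sub (hj'.trans (dvd_pow_self _ Fintype.card_pos.ne')) hj'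
    have hprime : Prime p := hirr.prime
    rcases (hprime.dvd_mul).mp hdvd with h | h
    · exact absurd h (not_dvd_X_pow_card_sub_X hirr (by omega) hj)
    · exact h

end CFF

namespace CFF
variable {Fq : Type*} [Field Fq] [Fintype Fq]
local notation "q" => Fintype.card Fq

section Lfield
variable (Fq) (L : Type*) [Field L] [Algebra (RatFunc Fq) L]

/-- The canonical map `F_q[x] → L`. -/
noncomputable def AM : Polynomial Fq →+* L :=
  (algebraMap (RatFunc Fq) L).comp (algebraMap (Polynomial Fq) (RatFunc Fq))

lemma AM_injective : Function.Injective (AM Fq L) :=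
  (algebraMap (RatFunc Fq) L).injective.comp (IsFractionRing.injective _ _)

/-- The Carlitz–Frobenius `z ↦ z^q + x z` on `L`. -/
noncomputable def cf (z : L) : L := z ^ q + AM Fq L Polynomial.X * z

variable {Fq} {L}

lemma cf_def :
    (fun w : L => w ^ q + algebraMap (RatFunc Fq) L RatFunc.X * w) = cf Fq L := by
  funext w
  rw [cf, AM, RingHom.comp_apply, RatFunc.algebraMap_X]

lemma carlitzAct_eq (a : Polynomial Fq) (z : L) :
    carlitzAct Fq a z
      = ∑ i ∈ Finset.range (a.natDegree + 1), AM Fq L (Polynomial.C (a.coeff i))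
          * (cf Fq L)^[i] z := by
  unfold carlitzAct
  rw [cf_def]
  exact Finset.sum_congr rfl fun i _ => by rw [AM, RingHom.comp_apply, RatFunc.algebraMap_C]

lemma cf_zero : cf Fq L 0 = 0 := by
  simp [cf, zero_pow (Fintype.card_pos (α := Fq)).ne']

lemma cf_add (y z : L) : cf Fq L (y + z) = cf Fq L y + cf Fq L z := by
  rw [cf, cf, cf, add_pow_q ((AM Fq L).comp (Polynomial.C))
    ((AM_injective Fq L).comp Polynomial.C_injective)]
  ring

/-- `cf` as an additive monoid hom. -/
noncomputable def cfHom : L →+ L :=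
  AddMonoidHom.mk' (cf Fq L) cf_add

lemma cf_iter_zero (i : ℕ) : (cf Fq L)^[i] 0 = 0 :=
  Function.iterate_fixed cf_zero i

lemma cf_iter_add (i : ℕ) (y z : L) :
    (cf Fq L)^[i] (y + z) = (cf Fq L)^[i] y + (cf Fq L)^[i] z := by
  induction i generalizing y z with
  | zero => rfl
  | succ i ih => simp only [Function.iterate_succ_apply, cf_add, ih]

lemma cf_smul (c : Fq) (w : L) :
    cf Fq L (AM Fq L (Polynomial.C c) * w) = AM Fq L (Polynomial.C c) * cf Fq L w := by
  rw [cf, cf, mul_pow, ← map_pow, ← map_pow, FiniteField.pow_card]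
  ring

lemma cf_iter_smul (i : ℕ) (c : Fq) (w : L) :
    (cf Fq L)^[i] (AM Fq L (Polynomial.C c) * w)
      = AM Fq L (Polynomial.C c) * (cf Fq L)^[i] w := by
  induction i generalizing w with
  | zero => rfl
  | succ i ih => simp only [Function.iterate_succ_apply, cf_smul, ih]

lemma cf_iter_eq_sum (i : ℕ) (z : L) :
    (cf Fq L)^[i] z = ∑ j ∈ Finset.range (i + 1), AM Fq L (Dc Fq i j) * z ^ (q ^ j) := by
  induction i with
  | zero => simp [Dc_zero_zero]
  | succ i ih =>
    rw [Function.iterate_succ_apply', ih, cf]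
    rw [sum_pow_q ((AM Fq L).comp (Polynomial.C))
      ((AM_injective Fq L).comp Polynomial.C_injective), Finset.mul_sum]
    have h1 : ∀ j ∈ Finset.range (i+1),
        (AM Fq L (Dc Fq i j) * z ^ q ^ j) ^ q
          = AM Fq L ((Dc Fq i j) ^ q) * z ^ (q ^ (j+1)) := by
      intro j _
      rw [mul_pow, ← map_pow, ← pow_mul, ← pow_succ]
    rw [Finset.sum_congr rfl h1]
    have h2 : ∀ j ∈ Finset.range (i+1),
        AM Fq L Polynomial.X * (AM Fq L (Dc Fq i j) * z ^ q ^ j)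
          = AM Fq L (Polynomial.X * Dc Fq i j) * z ^ q ^ j := by
      intro j _
      rw [map_mul]; ring
    rw [Finset.sum_congr rfl h2]
    -- reindex the RHS
    rw [Finset.sum_range_succ' (fun j => AM Fq L (Dc Fq (i+1) j) * z ^ q ^ j) (i+1)]
    have h3 : ∀ j ∈ Finset.range (i+1),
        AM Fq L (Dc Fq (i+1) (j+1)) * z ^ q ^ (j+1)
          = AM Fq L ((Dc Fq i j) ^ q) * z ^ (q ^ (j+1))
            + AM Fq L (Polynomial.X * Dc Fq i (j+1)) * z ^ q ^ (j+1) := by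
      intro j _
      rw [Dc_succ_succ, map_add, add_mul]
    rw [Finset.sum_congr rfl h3, Finset.sum_add_distrib]
    -- peel the last term (j = i) of the reindexed second sum
    rw [Finset.sum_range_succ
      (fun j => AM Fq L (Polynomial.X * Dc Fq i (j+1)) * z ^ q ^ (j+1)) i]
    rw [Dc_eq_zero i (i+1) (by omega)]
    -- peel the first term of the original second sum
    rw [Finset.sum_range_succ' (fun j => AM Fq L (Polynomial.X * Dc Fq i j) * z ^ q ^ j) i]
    rw [Dc_succ_zero]
    simp only [mul_zero, map_zero, zero_mul, add_zero, pow_zero, pow_one]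
    ring

end Lfield
end CFF

namespace CFF
variable {Fq : Type*} [Field Fq] [Fintype Fq]
local notation "q" => Fintype.card Fq

section Lfield2
variable {L : Type*} [Field L] [Algebra (RatFunc Fq) L]

lemma carlitzAct_eq_sum {a : Polynomial Fq} {N : ℕ} (h : a.natDegree < N) (z : L) :
    carlitzAct Fq a z
      = ∑ i ∈ Finset.range N, AM Fq L (Polynomial.C (a.coeff i)) * (cf Fq L)^[i] z := by
  rw [carlitzAct_eq]
  refine Finset.sum_subset (Finset.range_subset_range.mpr (by omega)) fun i _ hi => ?_
  rw [a.coeff_eq_zero_of_natDegree_lt (by simp at hi ⊢; omega), map_zero, map_zero, zero_mul]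

/-- `ρ_p(z) = ∑_j [p]_j z^{q^j}`. -/
lemma carlitzAct_eq_carlCoeff_sum (a : Polynomial Fq) (z : L) :
    carlitzAct Fq a z
      = ∑ j ∈ Finset.range (a.natDegree + 1), AM Fq L (carlCoeff Fq a j) * z ^ (q ^ j) := by
  rw [carlitzAct_eq]
  have h1 : ∀ i ∈ Finset.range (a.natDegree + 1),
      AM Fq L (Polynomial.C (a.coeff i)) * (cf Fq L)^[i] z
        = ∑ j ∈ Finset.range (a.natDegree + 1),
            AM Fq L (Polynomial.C (a.coeff i) * Dc Fq i j) * z ^ (q ^ j) := by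
    intro i hi
    simp only [Finset.mem_range] at hi
    rw [cf_iter_eq_sum, Finset.mul_sum]
    have he : ∀ j ∈ Finset.range (i+1),
        AM Fq L (Polynomial.C (a.coeff i)) * (AM Fq L (Dc Fq i j) * z ^ q ^ j)
          = AM Fq L (Polynomial.C (a.coeff i) * Dc Fq i j) * z ^ q ^ j :=
      fun j _ => by rw [map_mul]; ring
    rw [Finset.sum_congr rfl he]
    refine Finset.sum_subset (Finset.range_subset_range.mpr (by omega)) fun j _ hj => ?_
    rw [Dc_eq_zero i j (by simp at hj ⊢; omega), mul_zero, map_zero, zero_mul]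
  rw [Finset.sum_congr rfl h1, Finset.sum_comm]
  refine Finset.sum_congr rfl fun j _ => ?_
  rw [carlCoeff, map_sum, Finset.sum_mul]

lemma carlitzAct_zero_right (a : Polynomial Fq) : carlitzAct Fq a (0 : L) = 0 := by
  rw [carlitzAct_eq]
  exact Finset.sum_eq_zero fun i _ => by rw [cf_iter_zero, mul_zero]

lemma carlitzAct_add_right (a : Polynomial Fq) (y z : L) :
    carlitzAct Fq a (y + z) = carlitzAct Fq a y + carlitzAct Fq a z := by
  simp only [carlitzAct_eq, cf_iter_add, mul_add, Finset.sum_add_distrib]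

lemma carlitzAct_add_left (a b : Polynomial Fq) (z : L) :
    carlitzAct Fq (a + b) z = carlitzAct Fq a z + carlitzAct Fq b z := by
  rw [carlitzAct_eq_sum (N := max a.natDegree b.natDegree + (a+b).natDegree + 1) (by omega) z,
    carlitzAct_eq_sum (N := max a.natDegree b.natDegree + (a+b).natDegree + 1)
      (by have := Polynomial.natDegree_add_le a b; omega) z,
    carlitzAct_eq_sum (N := max a.natDegree b.natDegree + (a+b).natDegree + 1)
      (by have := Polynomial.natDegree_add_le a b; omega) z,
    ← Finset.sum_add_distrib]
  exact Finset.sum_congr rfl fun i _ => by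
    rw [Polynomial.coeff_add, map_add, map_add, add_mul]

lemma carlitzAct_zero_left (z : L) : carlitzAct Fq (0 : Polynomial Fq) z = 0 := by
  rw [carlitzAct_eq]
  simp

lemma cfHom_apply (z : L) : cfHom (Fq := Fq) (L := L) z = cf Fq L z := rfl

lemma carlitzAct_X_mul (a : Polynomial Fq) (z : L) :
    carlitzAct Fq (Polynomial.X * a) z = cf Fq L (carlitzAct Fq a z) := by
  rcases eq_or_ne a 0 with rfl | ha
  · rw [mul_zero, carlitzAct_zero_left, cf_zero]
  · rw [carlitzAct_eq_sum (N := a.natDegree + 1 + 1)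
      (by rw [Polynomial.natDegree_X_mul ha]; omega) z,
      Finset.sum_range_succ']
    have hc0 : (Polynomial.X * a).coeff 0 = 0 := by
      rw [mul_comm, Polynomial.coeff_mul_X_zero]
    rw [hc0, map_zero, map_zero, zero_mul, add_zero]
    rw [carlitzAct_eq a z, ← cfHom_apply, map_sum]
    refine Finset.sum_congr rfl fun i _ => ?_
    rw [Polynomial.coeff_X_mul, cfHom_apply, cf_smul, Function.iterate_succ_apply']

end Lfield2
end CFF

namespace CFF
variable {Fq : Type*} [Field Fq] [Fintype Fq]
local notation "q" => Fintype.card Fq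

section Lfield3
variable {L : Type*} [Field L] [Algebra (RatFunc Fq) L]

lemma carlitzAct_C_mul (c : Fq) (a : Polynomial Fq) (z : L) :
    carlitzAct Fq (Polynomial.C c * a) z
      = AM Fq L (Polynomial.C c) * carlitzAct Fq a z := by
  rcases eq_or_ne c 0 with rfl | hc
  · simp [carlitzAct_zero_left]
  · rw [carlitzAct_eq_sum (N := a.natDegree + 1)
      (by rw [Polynomial.natDegree_C_mul (by simpa using hc)]; omega) z,
      carlitzAct_eq a z, Finset.mul_sum]
    refine Finset.sum_congr rfl fun i _ => ?_
    rw [Polynomial.coeff_C_mul, ← mul_assoc, ← map_mul, ← Polynomial.C_mul]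

lemma carlitzAct_one (z : L) : carlitzAct Fq (1 : Polynomial Fq) z = z := by
  rw [carlitzAct_eq]
  simp

lemma carlitzAct_monomial_mul (n : ℕ) (c : Fq) (a : Polynomial Fq) (z : L) :
    carlitzAct Fq (Polynomial.C c * Polynomial.X ^ n * a) z
      = AM Fq L (Polynomial.C c) * (cf Fq L)^[n] (carlitzAct Fq a z) := by
  induction n generalizing a with
  | zero => simpa using carlitzAct_C_mul c a z
  | succ n ih =>
    have : Polynomial.C c * Polynomial.X ^ (n+1) * a
        = Polynomial.X * (Polynomial.C c * Polynomial.X ^ n * a) := by ring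
    rw [this, carlitzAct_X_mul, ih, cf_smul, Function.iterate_succ_apply']

lemma carlitzAct_mul (a b : Polynomial Fq) (z : L) :
    carlitzAct Fq (a * b) z = carlitzAct Fq a (carlitzAct Fq b z) := by
  induction a using Polynomial.induction_on' with
  | add u v hu hv => rw [add_mul, carlitzAct_add_left, hu, hv, carlitzAct_add_left]
  | monomial n c =>
    rw [← Polynomial.C_mul_X_pow_eq_monomial, carlitzAct_monomial_mul]
    rw [show Polynomial.C c * Polynomial.X ^ n
        = Polynomial.C c * Polynomial.X ^ n * 1 by ring, carlitzAct_monomial_mul,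
      carlitzAct_one]

/-- `carlitzAct` commutes with `K`-algebra homomorphisms. -/
lemma carlitzAct_algHom {L' : Type*} [Field L'] [Algebra (RatFunc Fq) L']
    (g : L →ₐ[RatFunc Fq] L') (a : Polynomial Fq) (z : L) :
    g (carlitzAct Fq a z) = carlitzAct Fq a (g z) := by
  have hcf : ∀ w : L, g (cf Fq L w) = cf Fq L' (g w) := by
    intro w
    rw [cf, cf, map_add, map_mul, map_pow, AM, AM, RingHom.comp_apply, RingHom.comp_apply,
      AlgHom.commutes]
  have hiter : ∀ (i : ℕ) (w : L), g ((cf Fq L)^[i] w) = (cf Fq L')^[i] (g w) := by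
    intro i
    induction i with
    | zero => intro w; rfl
    | succ i ih =>
      intro w
      rw [Function.iterate_succ_apply, Function.iterate_succ_apply, ih (cf Fq L w), hcf w]
  rw [carlitzAct_eq, carlitzAct_eq, map_sum]
  refine Finset.sum_congr rfl fun i _ => ?_
  rw [map_mul, hiter, AM, AM, RingHom.comp_apply, RingHom.comp_apply, AlgHom.commutes]

/-- `carlitzAct` maps an intermediate field into itself. -/
lemma carlitzAct_mem (E : IntermediateField (RatFunc Fq) L) (a : Polynomial Fq)
    {z : L} (hz : z ∈ E) : carlitzAct Fq a z ∈ E := by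
  have hcf : ∀ w : L, w ∈ E → cf Fq L w ∈ E := by
    intro w hw
    exact add_mem (pow_mem hw _) (mul_mem (E.algebraMap_mem _) hw)
  have hiter : ∀ (i : ℕ) (w : L), w ∈ E → (cf Fq L)^[i] w ∈ E := by
    intro i
    induction i with
    | zero => exact fun w hw => hw
    | succ i ih =>
      intro w hw
      rw [Function.iterate_succ_apply]
      exact ih _ (hcf w hw)
  rw [carlitzAct_eq]
  exact sum_mem fun i _ => mul_mem (by rw [AM, RingHom.comp_apply]; exact E.algebraMap_mem _) (hiter i z hz)
end Lfield3
end CFF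

namespace CFF
variable {Fq : Type*} [Field Fq] [Fintype Fq]
local notation "q" => Fintype.card Fq

variable (Fq) in
/-- The polynomial `ψ_p(Z) = ρ_p(Z)/Z = ∑_j [p]_j Z^{q^j - 1}` over `F_q[x]`. -/
noncomputable def psi (p : Polynomial Fq) : Polynomial (Polynomial Fq) :=
  ∑ j ∈ Finset.range (p.natDegree + 1),
    Polynomial.C (carlCoeff Fq p j) * Polynomial.X ^ (q ^ j - 1)

lemma qpow_sub_one_lt {i j : ℕ} (h : i < j) : q ^ i - 1 < q ^ j - 1 := by
  have h1 : q ^ i < q ^ j := Nat.pow_lt_pow_right Fintype.one_lt_card h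
  have h2 : 0 < q ^ i := pow_pos Fintype.card_pos i
  omega

lemma psi_coeff (p : Polynomial Fq) (k : ℕ) :
    (psi Fq p).coeff k = ∑ j ∈ Finset.range (p.natDegree + 1),
      if q ^ j - 1 = k then carlCoeff Fq p j else 0 := by
  rw [psi, Polynomial.finset_sum_coeff]
  exact Finset.sum_congr rfl fun j _ => by
    rw [Polynomial.coeff_C_mul, Polynomial.coeff_X_pow, mul_ite, mul_one, mul_zero]
    exact if_congr ⟨Eq.symm, Eq.symm⟩ rfl rfl

lemma psi_coeff_pow {p : Polynomial Fq} {j : ℕ} (hj : j ≤ p.natDegree) :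
    (psi Fq p).coeff (q ^ j - 1) = carlCoeff Fq p j := by
  rw [psi_coeff]
  rw [Finset.sum_eq_single j (fun b _ hb => ?_) (fun h => absurd (by simp; omega) h)]
  · rw [if_pos rfl]
  · rw [if_neg]
    rcases lt_or_gt_of_ne hb with h | h
    · exact (qpow_sub_one_lt (Fq := Fq) h).ne
    · exact (qpow_sub_one_lt (Fq := Fq) h).ne'

lemma psi_natDegree_le (p : Polynomial Fq) : (psi Fq p).natDegree ≤ q ^ p.natDegree - 1 := by
  refine Polynomial.natDegree_sum_le_of_forall_le _ _ fun j hj => ?_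
  refine (Polynomial.natDegree_C_mul_X_pow_le _ _).trans ?_
  simp only [Finset.mem_range] at hj
  rcases Nat.lt_succ_iff.mp hj |>.lt_or_eq with h | h
  · exact (qpow_sub_one_lt (Fq := Fq) h).le
  · rw [h]

lemma psi_natDegree {p : Polynomial Fq} (hm : p.Monic) :
    (psi Fq p).natDegree = q ^ p.natDegree - 1 := by
  refine Polynomial.natDegree_eq_of_le_of_coeff_ne_zero (psi_natDegree_le p) ?_
  rw [psi_coeff_pow (le_refl _), carlCoeff_natDegree hm]
  exact one_ne_zero

lemma psi_monic {p : Polynomial Fq} (hm : p.Monic) : (psi Fq p).Monic := by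
  rw [Polynomial.Monic, Polynomial.leadingCoeff, psi_natDegree hm,
    psi_coeff_pow (le_refl _), carlCoeff_natDegree hm]

lemma psi_isEisenstein {p : Polynomial Fq} (hm : p.Monic) (hirr : Irreducible p) :
    (psi Fq p).IsEisensteinAt (Ideal.span {p}) := by
  have hd : 0 < p.natDegree := hirr.natDegree_pos
  constructor
  · rw [Polynomial.Monic.leadingCoeff (psi_monic hm), Ideal.mem_span_singleton]
    exact fun h => hirr.not_isUnit (isUnit_of_dvd_one h)
  · intro n hn
    rw [psi_natDegree hm] at hn
    rw [psi_coeff, Ideal.mem_span_singleton]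
    refine Finset.dvd_sum fun j hj => ?_
    split_ifs with h
    · refine dvd_carlCoeff hirr ?_
      simp only [Finset.mem_range] at hj
      rcases Nat.lt_succ_iff.mp hj |>.lt_or_eq with h' | h'
      · exact h'
      · exfalso; rw [h'] at h; omega
    · exact dvd_zero p
  · have h0 : (psi Fq p).coeff 0 = p := by
      have := psi_coeff_pow (p := p) (j := 0) (by omega)
      simpa [carlCoeff_zero] using this
    rw [h0, Ideal.span_singleton_pow, Ideal.mem_span_singleton]
    intro hdvd
    rw [pow_two] at hdvd
    obtain ⟨c, hc⟩ := hdvd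
    have : p * 1 = p * (p * c) := by rw [mul_one]; nth_rewrite 1 [hc]; ring
    have := mul_left_cancel₀ hirr.ne_zero this
    exact hirr.not_isUnit (isUnit_of_dvd_one ⟨c, this⟩)

lemma psi_irreducible {p : Polynomial Fq} (hm : p.Monic) (hirr : Irreducible p) :
    Irreducible (psi Fq p) := by
  have hd : 0 < p.natDegree := hirr.natDegree_pos
  refine (psi_isEisenstein hm hirr).irreducible
    ((Ideal.span_singleton_prime hirr.ne_zero).mpr hirr.prime)
    (psi_monic hm).isPrimitive ?_
  rw [psi_natDegree hm]
  have : 1 < q ^ p.natDegree := one_lt_pow₀ Fintype.one_lt_card hd.ne'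
  omega

end CFF

namespace CFF
variable {Fq : Type*} [Field Fq] [Fintype Fq]
local notation "q" => Fintype.card Fq

lemma psi_coeff_zero (p : Polynomial Fq) : (psi Fq p).coeff 0 = p := by
  have := psi_coeff_pow (p := p) (j := 0) (by omega)
  simpa [carlCoeff_zero] using this

section KK
variable (Fq) (p : Polynomial Fq)

/-- `ψ_p` viewed over `K = F_q(x)`. -/
noncomputable def PsiK : Polynomial (RatFunc Fq) :=
  (psi Fq p).map (algebraMap (Polynomial Fq) (RatFunc Fq))

variable {Fq} {p}

lemma PsiK_monic (hm : p.Monic) : (PsiK Fq p).Monic := (psi_monic hm).map _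

lemma PsiK_natDegree (hm : p.Monic) : (PsiK Fq p).natDegree = q ^ p.natDegree - 1 := by
  rw [PsiK, (psi_monic hm).natDegree_map, psi_natDegree hm]

lemma PsiK_irreducible (hm : p.Monic) (hirr : Irreducible p) : Irreducible (PsiK Fq p) :=
  ((psi_monic hm).irreducible_iff_irreducible_map_fraction_map).mp (psi_irreducible hm hirr)

variable {L : Type*} [Field L] [Algebra (RatFunc Fq) L]

lemma aeval_PsiK (z : L) :
    (Polynomial.aeval z) (PsiK Fq p)
      = ∑ j ∈ Finset.range (p.natDegree + 1),
          AM Fq L (carlCoeff Fq p j) * z ^ (q ^ j - 1) := by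
  rw [PsiK, Polynomial.aeval_def, Polynomial.eval₂_map, psi, Polynomial.eval₂_finset_sum]
  exact Finset.sum_congr rfl fun j _ => by
    rw [Polynomial.eval₂_mul, Polynomial.eval₂_C, Polynomial.eval₂_X_pow]; rfl

lemma carlitzAct_eq_mul_psi (z : L) :
    carlitzAct Fq p z = z * (Polynomial.aeval z) (PsiK Fq p) := by
  rw [carlitzAct_eq_carlCoeff_sum, aeval_PsiK, Finset.mul_sum]
  refine Finset.sum_congr rfl fun j _ => ?_
  have h1 : q ^ j - 1 + 1 = q ^ j := by
    have := pow_pos (Fintype.card_pos (α := Fq)) j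
    omega
  conv_lhs => rw [← h1]
  rw [pow_succ']
  ring

end KK
end CFF

set_option synthInstance.maxHeartbeats 1000000 in
set_option maxHeartbeats 1000000 in
/-- For `K = F_q(x)` and `p(x) ∈ F_q[x]` monic irreducible of degree
`d`, the Galois group `Gal(K(Λ_{p(x)})/K)` is isomorphic to the unit group
`(F_q[x]/(p(x)))ˣ`; in particular it is cyclic of order `q^d - 1`. -/
theorem cyclotomicFunctionField_galoisGroup
    (Fq : Type*) [Field Fq] [Fintype Fq]
    (p : Polynomial Fq) (hmonic : p.Monic) (hirr : Irreducible p) :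
    Nonempty ((↥(cyclotomicFunctionField Fq p) ≃ₐ[RatFunc Fq]
          ↥(cyclotomicFunctionField Fq p)) ≃*
        (Polynomial Fq ⧸ Ideal.span ({p} : Set (Polynomial Fq)))ˣ) ∧
      IsCyclic (↥(cyclotomicFunctionField Fq p) ≃ₐ[RatFunc Fq]
          ↥(cyclotomicFunctionField Fq p)) ∧
      Nat.card (↥(cyclotomicFunctionField Fq p) ≃ₐ[RatFunc Fq]
          ↥(cyclotomicFunctionField Fq p)) = Fintype.card Fq ^ p.natDegree - 1 := by
  classical
  have hd : 0 < p.natDegree := hirr.natDegree_pos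
  have hq1 : (1:ℕ) < Fintype.card Fq := Fintype.one_lt_card
  have hqd : 1 < Fintype.card Fq ^ p.natDegree := one_lt_pow₀ hq1 hd.ne'
  have hdegK : (CFF.PsiK Fq p).natDegree = Fintype.card Fq ^ p.natDegree - 1 :=
    CFF.PsiK_natDegree hmonic
  have hndpos : 0 < (CFF.PsiK Fq p).natDegree := by rw [hdegK]; omega
  -- a root of ψ_p in the algebraic closure
  obtain ⟨lam, hlam⟩ := IsAlgClosed.exists_aeval_eq_zero
    (AlgebraicClosure (RatFunc Fq)) (CFF.PsiK Fq p)
    (Polynomial.natDegree_pos_iff_degree_pos.mp hndpos).ne'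
  have hlam0 : lam ≠ 0 := by
    intro h0
    rw [h0, Polynomial.aeval_def, Polynomial.eval₂_at_zero] at hlam
    have hc0 : (CFF.PsiK Fq p).coeff 0 = algebraMap (Polynomial Fq) (RatFunc Fq) p := by
      rw [CFF.PsiK, Polynomial.coeff_map, CFF.psi_coeff_zero]
    rw [hc0] at hlam
    have h1 := (map_eq_zero_iff _
      (algebraMap (RatFunc Fq) (AlgebraicClosure (RatFunc Fq))).injective).mp hlam
    have h2 := (map_eq_zero_iff _
      (IsFractionRing.injective (Polynomial Fq) (RatFunc Fq))).mp h1
    exact hirr.ne_zero h2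
  have hactlam : carlitzAct Fq p lam = 0 := by
    rw [CFF.carlitzAct_eq_mul_psi, hlam, mul_zero]
  -- divisibility criteria
  have hdvd0 : ∀ a : Polynomial Fq, p ∣ a → carlitzAct Fq a lam = 0 := by
    rintro a ⟨c, rfl⟩
    rw [mul_comm, CFF.carlitzAct_mul, hactlam, CFF.carlitzAct_zero_right]
  have hzero_dvd : ∀ a : Polynomial Fq, carlitzAct Fq a lam = 0 → p ∣ a := by
    intro a ha
    by_contra hnd
    obtain ⟨u, v, huv⟩ := hirr.coprime_iff_not_dvd.mpr hnd
    have h1 := CFF.carlitzAct_one (Fq := Fq) lam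
    rw [← huv, CFF.carlitzAct_add_left, CFF.carlitzAct_mul, CFF.carlitzAct_mul, hactlam, ha,
      CFF.carlitzAct_zero_right, CFF.carlitzAct_zero_right, add_zero] at h1
    exact hlam0 h1.symm
  have hUnique : ∀ a b : Polynomial Fq,
      carlitzAct Fq a lam = carlitzAct Fq b lam ↔
        Ideal.Quotient.mk (Ideal.span {p}) a = Ideal.Quotient.mk (Ideal.span {p}) b := by
    intro a b
    have hsub : carlitzAct Fq (a - b) lam = carlitzAct Fq a lam - carlitzAct Fq b lam := by
      have h := CFF.carlitzAct_add_left (a - b) b lam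
      rw [sub_add_cancel] at h
      linear_combination -h
    constructor
    · intro h
      rw [Ideal.Quotient.eq, Ideal.mem_span_singleton]
      exact hzero_dvd _ (by rw [hsub, h, sub_self])
    · intro h
      have h2 := hdvd0 _ (Ideal.mem_span_singleton.mp (Ideal.Quotient.eq.mp h))
      rw [hsub] at h2
      linear_combination h2
  -- the residue field
  haveI hmax : (Ideal.span ({p} : Set (Polynomial Fq))).IsMaximal :=
    PrincipalIdealRing.isMaximal_of_irreducible hirr
  letI : Field (Polynomial Fq ⧸ Ideal.span ({p} : Set (Polynomial Fq))) :=
    Ideal.Quotient.field _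
  letI instF : Fintype (Polynomial Fq ⧸ Ideal.span ({p} : Set (Polynomial Fq))) :=
    (Module.fintypeOfFintype (AdjoinRoot.powerBasis hirr.ne_zero).basis : Fintype (AdjoinRoot p))
  have hcardF : Fintype.card (Polynomial Fq ⧸ Ideal.span ({p} : Set (Polynomial Fq)))
      = Fintype.card Fq ^ p.natDegree := @CFF.card_adjoinRoot Fq _ _ p hirr instF
  -- the orbit map from the residue field to the torsion points
  choose rep hrep using Ideal.Quotient.mk_surjective (I := Ideal.span ({p} : Set (Polynomial Fq)))
  set g : (Polynomial Fq ⧸ Ideal.span ({p} : Set (Polynomial Fq)))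
      → AlgebraicClosure (RatFunc Fq) := fun t => carlitzAct Fq (rep t) lam with hg
  have hg_inj : Function.Injective g := by
    intro s t h
    rw [← hrep s, ← hrep t]
    exact (hUnique _ _).mp h
  have hg_root : ∀ t, carlitzAct Fq p (g t) = 0 := by
    intro t
    show carlitzAct Fq p (carlitzAct Fq (rep t) lam) = 0
    rw [← CFF.carlitzAct_mul, mul_comm, CFF.carlitzAct_mul, hactlam,
      CFF.carlitzAct_zero_right]
  -- the polynomial Φ = Z·ψ_p(Z), whose roots are exactly the torsion points
  set Phi : Polynomial (RatFunc Fq) := Polynomial.X * CFF.PsiK Fq p with hPhi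
  have hPhi_monic : Phi.Monic := (Polynomial.monic_X).mul (CFF.PsiK_monic hmonic)
  have hPhi_ne : Phi ≠ 0 := hPhi_monic.ne_zero
  have hPhi_deg : Phi.natDegree = Fintype.card Fq ^ p.natDegree := by
    rw [hPhi, Polynomial.natDegree_mul Polynomial.X_ne_zero (CFF.PsiK_monic hmonic).ne_zero,
      Polynomial.natDegree_X, hdegK]
    omega
  have haevalPhi : ∀ α : AlgebraicClosure (RatFunc Fq),
      (Polynomial.aeval α) Phi = carlitzAct Fq p α := by
    intro α
    rw [hPhi, map_mul, Polynomial.aeval_X, CFF.carlitzAct_eq_mul_psi]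
  have hS_root : {α : AlgebraicClosure (RatFunc Fq) | carlitzAct Fq p α = 0}
      = Phi.rootSet (AlgebraicClosure (RatFunc Fq)) := by
    ext α
    rw [Polynomial.mem_rootSet, Set.mem_setOf_eq, haevalPhi α]
    exact ⟨fun h => ⟨hPhi_ne, h⟩, fun h => h.2⟩
  -- every torsion point is in the orbit of `lam`
  have hS_sub : ∀ α : AlgebraicClosure (RatFunc Fq),
      carlitzAct Fq p α = 0 → ∃ t, g t = α := by
    have hTsub : Finset.image g Finset.univ
        ⊆ (Phi.aroots (AlgebraicClosure (RatFunc Fq))).toFinset := by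
      intro α hα
      obtain ⟨t, _, rfl⟩ := Finset.mem_image.mp hα
      rw [Multiset.mem_toFinset, Polynomial.mem_aroots]
      exact ⟨hPhi_ne, by rw [haevalPhi]; exact hg_root t⟩
    have hTcard : (Phi.aroots (AlgebraicClosure (RatFunc Fq))).toFinset.card
        ≤ Fintype.card Fq ^ p.natDegree := by
      calc (Phi.aroots (AlgebraicClosure (RatFunc Fq))).toFinset.card
          ≤ Multiset.card (Phi.aroots (AlgebraicClosure (RatFunc Fq))) :=
            Multiset.toFinset_card_le _
        _ ≤ (Phi.map (algebraMap (RatFunc Fq) (AlgebraicClosure (RatFunc Fq)))).natDegree :=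
            Polynomial.card_roots' _
        _ = Phi.natDegree := hPhi_monic.natDegree_map _
        _ = Fintype.card Fq ^ p.natDegree := hPhi_deg
    have himg : (Finset.image g Finset.univ).card = Fintype.card Fq ^ p.natDegree := by
      rw [Finset.card_image_of_injective _ hg_inj, Finset.card_univ, hcardF]
    have heq : Finset.image g Finset.univ
        = (Phi.aroots (AlgebraicClosure (RatFunc Fq))).toFinset :=
      Finset.eq_of_subset_of_card_le hTsub (by rw [himg]; exact hTcard)
    intro α hα
    have hαmem : α ∈ (Phi.aroots (AlgebraicClosure (RatFunc Fq))).toFinset := by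
      rw [Multiset.mem_toFinset, Polynomial.mem_aroots]
      exact ⟨hPhi_ne, by rw [haevalPhi]; exact hα⟩
    rw [← heq] at hαmem
    obtain ⟨t, _, ht⟩ := Finset.mem_image.mp hαmem
    exact ⟨t, ht⟩
  -- the cyclotomic function field is K(λ)
  have hE : cyclotomicFunctionField Fq p
      = IntermediateField.adjoin (RatFunc Fq) {lam} := by
    apply le_antisymm
    · refine IntermediateField.adjoin_le_iff.mpr ?_
      intro α hα
      obtain ⟨t, rfl⟩ := hS_sub α hα
      exact CFF.carlitzAct_mem _ _ (IntermediateField.mem_adjoin_simple_self _ lam)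
    · refine IntermediateField.adjoin_le_iff.mpr ?_
      intro x hx
      rw [Set.mem_singleton_iff] at hx
      subst hx
      exact IntermediateField.subset_adjoin _ _ hactlam
  have hint : IsIntegral (RatFunc Fq) lam :=
    ⟨CFF.PsiK Fq p, CFF.PsiK_monic hmonic, by rw [← Polynomial.aeval_def]; exact hlam⟩
  have hminpoly : minpoly (RatFunc Fq) lam = CFF.PsiK Fq p :=
    (minpoly.eq_of_irreducible_of_monic (CFF.PsiK_irreducible hmonic hirr) hlam
      (CFF.PsiK_monic hmonic)).symm
  rw [hE]
  haveI : FiniteDimensional (RatFunc Fq)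
      (IntermediateField.adjoin (RatFunc Fq) {lam}) :=
    IntermediateField.adjoin.finiteDimensional hint
  have hfinrank : Module.finrank (RatFunc Fq)
      (IntermediateField.adjoin (RatFunc Fq) ({lam} :
        Set (AlgebraicClosure (RatFunc Fq))))
      = Fintype.card Fq ^ p.natDegree - 1 := by
    rw [IntermediateField.adjoin.finrank hint, hminpoly, hdegK]
  -- Galois
  have hsplits : (Phi.map (algebraMap (RatFunc Fq) (AlgebraicClosure (RatFunc Fq)))).Splits :=
    IsAlgClosed.splits _
  haveI hsf : Polynomial.IsSplittingField (RatFunc Fq)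
      (IntermediateField.adjoin (RatFunc Fq) {lam}) Phi := by
    have h := IntermediateField.adjoin_rootSet_isSplittingField
      (L := AlgebraicClosure (RatFunc Fq)) hsplits
    have h2 : IntermediateField.adjoin (RatFunc Fq)
        (Phi.rootSet (AlgebraicClosure (RatFunc Fq)))
        = IntermediateField.adjoin (RatFunc Fq) {lam} := by
      rw [← hS_root]
      exact hE
    rwa [h2] at h
  have hsep : Phi.Separable := by
    have hchar : CharP (RatFunc Fq) (ringChar Fq) :=
      charP_of_injective_algebraMap' Fq (A := RatFunc Fq) (ringChar Fq)
    obtain ⟨n, hprime, hcardq⟩ := FiniteField.card Fq (ringChar Fq)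
    have hPhi_expand : Phi = ∑ j ∈ Finset.range (p.natDegree + 1),
        Polynomial.C (algebraMap (Polynomial Fq) (RatFunc Fq) (CFF.carlCoeff Fq p j))
          * Polynomial.X ^ (Fintype.card Fq ^ j) := by
      rw [hPhi, CFF.PsiK, CFF.psi, Polynomial.map_sum, Finset.mul_sum]
      refine Finset.sum_congr rfl fun j _ => ?_
      rw [Polynomial.map_mul, Polynomial.map_pow, Polynomial.map_C, Polynomial.map_X]
      have h1 : Fintype.card Fq ^ j - 1 + 1 = Fintype.card Fq ^ j := by
        have := pow_pos (Fintype.card_pos (α := Fq)) j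
        omega
      conv_rhs => rw [← h1]
      rw [pow_succ]
      ring
    have hderiv : Polynomial.derivative Phi
        = Polynomial.C (algebraMap (Polynomial Fq) (RatFunc Fq) p) := by
      rw [hPhi_expand, Polynomial.derivative_sum]
      rw [Finset.sum_eq_single 0 (fun j _ hj => ?_) (fun h => absurd (Finset.mem_range.mpr (by omega)) h)]
      · simp [CFF.carlCoeff_zero]
      · rw [Polynomial.derivative_C_mul_X_pow]
        have hj1 : 1 ≤ j := Nat.one_le_iff_ne_zero.mpr hj
        have hzero : ((Fintype.card Fq ^ j : ℕ) : RatFunc Fq) = 0 := by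
          rw [Nat.cast_pow]
          have : ((Fintype.card Fq : ℕ) : RatFunc Fq) = 0 := by
            rw [CharP.cast_eq_zero_iff (RatFunc Fq) (ringChar Fq), hcardq]
            exact dvd_pow_self _ (by positivity)
          rw [this, zero_pow (by omega)]
        rw [hzero, mul_zero, Polynomial.C_0, zero_mul]
    rw [Polynomial.Separable, hderiv]
    have hcne : algebraMap (Polynomial Fq) (RatFunc Fq) p ≠ 0 := fun h =>
      hirr.ne_zero ((map_eq_zero_iff _ (IsFractionRing.injective _ _)).mp h)
    exact ⟨0, Polynomial.C (algebraMap (Polynomial Fq) (RatFunc Fq) p)⁻¹, by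
      rw [zero_mul, zero_add, ← Polynomial.C_mul, inv_mul_cancel₀ hcne, Polynomial.C_1]⟩
  haveI hgal : IsGalois (RatFunc Fq) (IntermediateField.adjoin (RatFunc Fq) {lam}) :=
    IsGalois.of_separable_splitting_field hsep
  -- cardinality of the Galois group
  have hcardGal : Fintype.card
      ((IntermediateField.adjoin (RatFunc Fq) {lam}) ≃ₐ[RatFunc Fq]
        (IntermediateField.adjoin (RatFunc Fq) {lam}))
      = Fintype.card Fq ^ p.natDegree - 1 := by
    rw [← Nat.card_eq_fintype_card, IsGalois.card_aut_eq_finrank, hfinrank]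
  -- the generator of E
  set gen : IntermediateField.adjoin (RatFunc Fq) ({lam} :
      Set (AlgebraicClosure (RatFunc Fq))) :=
    IntermediateField.AdjoinSimple.gen (RatFunc Fq) lam with hgendef
  have hval_gen : ((IntermediateField.adjoin (RatFunc Fq) ({lam} :
      Set (AlgebraicClosure (RatFunc Fq)))).val) gen = lam := rfl
  have hval_act : ∀ (a : Polynomial Fq) (z : IntermediateField.adjoin (RatFunc Fq) ({lam} :
      Set (AlgebraicClosure (RatFunc Fq)))),
      ((IntermediateField.adjoin (RatFunc Fq) ({lam} :
        Set (AlgebraicClosure (RatFunc Fq)))).val) (carlitzAct Fq a z)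
        = carlitzAct Fq a (((IntermediateField.adjoin (RatFunc Fq) ({lam} :
          Set (AlgebraicClosure (RatFunc Fq)))).val) z) :=
    fun a z => CFF.carlitzAct_algHom _ a z
  have hact_gen : ∀ a : Polynomial Fq,
      ((IntermediateField.adjoin (RatFunc Fq) ({lam} :
        Set (AlgebraicClosure (RatFunc Fq)))).val) (carlitzAct Fq a gen)
        = carlitzAct Fq a lam := by
    intro a
    rw [hval_act, hval_gen]
  have hactp_gen : carlitzAct Fq p gen = 0 := by
    apply Subtype.val_injective
    show ((IntermediateField.adjoin (RatFunc Fq) ({lam} :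
      Set (AlgebraicClosure (RatFunc Fq)))).val) (carlitzAct Fq p gen) = _
    rw [hact_gen]
    simpa using hactlam
  -- existence of a polynomial representing each automorphism
  have hex : ∀ σ : (IntermediateField.adjoin (RatFunc Fq) {lam}) ≃ₐ[RatFunc Fq]
      (IntermediateField.adjoin (RatFunc Fq) {lam}),
      ∃ a : Polynomial Fq, carlitzAct Fq a lam
        = ((IntermediateField.adjoin (RatFunc Fq) ({lam} :
          Set (AlgebraicClosure (RatFunc Fq)))).val) (σ gen) := by
    intro σ
    have hσ0 : carlitzAct Fq p (((IntermediateField.adjoin (RatFunc Fq) ({lam} :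
        Set (AlgebraicClosure (RatFunc Fq)))).val) (σ gen)) = 0 := by
      rw [← hval_act]
      have h1 : carlitzAct Fq p (σ gen) = σ (carlitzAct Fq p gen) :=
        (CFF.carlitzAct_algHom (σ : (IntermediateField.adjoin (RatFunc Fq) {lam}) →ₐ[RatFunc Fq]
          (IntermediateField.adjoin (RatFunc Fq) {lam})) p gen).symm
      rw [h1, hactp_gen, map_zero, map_zero]
    obtain ⟨t, ht⟩ := hS_sub _ hσ0
    exact ⟨rep t, ht⟩
  set Θ := fun σ : (IntermediateField.adjoin (RatFunc Fq) {lam}) ≃ₐ[RatFunc Fq]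
      (IntermediateField.adjoin (RatFunc Fq) {lam}) =>
    Ideal.Quotient.mk (Ideal.span ({p} : Set (Polynomial Fq))) (Classical.choose (hex σ))
    with hΘdef
  have hΘ_spec : ∀ σ, carlitzAct Fq (Classical.choose (hex σ)) lam
      = ((IntermediateField.adjoin (RatFunc Fq) ({lam} :
        Set (AlgebraicClosure (RatFunc Fq)))).val) (σ gen) :=
    fun σ => Classical.choose_spec (hex σ)
  have hΘ_eq : ∀ (σ) (a : Polynomial Fq),
      carlitzAct Fq a lam = ((IntermediateField.adjoin (RatFunc Fq) ({lam} :
        Set (AlgebraicClosure (RatFunc Fq)))).val) (σ gen) →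
      Θ σ = Ideal.Quotient.mk (Ideal.span ({p} : Set (Polynomial Fq))) a := by
    intro σ a ha
    exact (hUnique _ _).mp (by rw [hΘ_spec σ, ha])
  have hΘ_mul : ∀ σ τ, Θ (σ * τ) = Θ σ * Θ τ := by
    intro σ τ
    have hτ : τ gen = carlitzAct Fq (Classical.choose (hex τ)) gen := by
      apply Subtype.val_injective
      show ((IntermediateField.adjoin (RatFunc Fq) ({lam} :
        Set (AlgebraicClosure (RatFunc Fq)))).val) (τ gen)
        = ((IntermediateField.adjoin (RatFunc Fq) ({lam} :
          Set (AlgebraicClosure (RatFunc Fq)))).val)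
            (carlitzAct Fq (Classical.choose (hex τ)) gen)
      rw [hact_gen]
      exact (hΘ_spec τ).symm
    have hστ : carlitzAct Fq (Classical.choose (hex τ) * Classical.choose (hex σ)) lam
        = ((IntermediateField.adjoin (RatFunc Fq) ({lam} :
          Set (AlgebraicClosure (RatFunc Fq)))).val) ((σ * τ) gen) := by
      show _ = ((IntermediateField.adjoin (RatFunc Fq) ({lam} :
        Set (AlgebraicClosure (RatFunc Fq)))).val) (σ (τ gen))
      conv_rhs => rw [hτ]
      have h1 : σ (carlitzAct Fq (Classical.choose (hex τ)) gen)
          = carlitzAct Fq (Classical.choose (hex τ)) (σ gen) :=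
        CFF.carlitzAct_algHom (σ : (IntermediateField.adjoin (RatFunc Fq) {lam}) →ₐ[RatFunc Fq]
          (IntermediateField.adjoin (RatFunc Fq) {lam})) _ gen
      rw [h1, hval_act, CFF.carlitzAct_mul]
      exact congrArg _ (hΘ_spec σ)
    have h2 := hΘ_eq (σ * τ) _ hστ
    rw [h2, map_mul]
    simp only [hΘdef]
    exact mul_comm _ _
  have hΘ_ne : ∀ σ, Θ σ ≠ 0 := by
    intro σ h0
    have h1 : carlitzAct Fq (Classical.choose (hex σ)) lam = 0 := by
      have hmk : Ideal.Quotient.mk (Ideal.span ({p} : Set (Polynomial Fq)))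
          (Classical.choose (hex σ))
          = Ideal.Quotient.mk (Ideal.span ({p} : Set (Polynomial Fq))) 0 := by
        rw [map_zero]; exact h0
      have := (hUnique _ 0).mpr hmk
      rwa [CFF.carlitzAct_zero_left] at this
    have h2 : σ gen = 0 := Subtype.val_injective (by
      have h1' := h1
      rw [hΘ_spec σ] at h1'
      simpa using h1')
    have h3 : gen = 0 := σ.injective (by rw [h2, map_zero])
    exact hlam0 (by rw [← hval_gen, h3, map_zero])
  -- the monoid hom into the unit group
  set θ : ((IntermediateField.adjoin (RatFunc Fq) {lam}) ≃ₐ[RatFunc Fq]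
      (IntermediateField.adjoin (RatFunc Fq) {lam})) →*
      (Polynomial Fq ⧸ Ideal.span ({p} : Set (Polynomial Fq)))ˣ :=
    MonoidHom.mk' (fun σ => (Ne.isUnit (hΘ_ne σ)).unit) (by
      intro σ τ
      apply Units.ext
      rw [Units.val_mul, IsUnit.unit_spec, IsUnit.unit_spec, IsUnit.unit_spec]
      exact hΘ_mul σ τ) with hθdef
  have hθ_coe : ∀ σ, ((θ σ : (Polynomial Fq ⧸ Ideal.span ({p} : Set (Polynomial Fq)))ˣ) :
      Polynomial Fq ⧸ Ideal.span ({p} : Set (Polynomial Fq))) = Θ σ :=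
    fun σ => IsUnit.unit_spec _
  have hθ_inj : Function.Injective θ := by
    intro σ τ h
    have hΘeq : Θ σ = Θ τ := by rw [← hθ_coe, ← hθ_coe, h]
    have hacteq : carlitzAct Fq (Classical.choose (hex σ)) lam
        = carlitzAct Fq (Classical.choose (hex τ)) lam := (hUnique _ _).mpr hΘeq
    have hgeneq : σ gen = τ gen := Subtype.val_injective (by
      show ((IntermediateField.adjoin (RatFunc Fq) ({lam} :
        Set (AlgebraicClosure (RatFunc Fq)))).val) (σ gen)
        = ((IntermediateField.adjoin (RatFunc Fq) ({lam} :
          Set (AlgebraicClosure (RatFunc Fq)))).val) (τ gen)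
      rw [← hΘ_spec σ, ← hΘ_spec τ, hacteq])
    have halg : (σ : (IntermediateField.adjoin (RatFunc Fq) {lam}) →ₐ[RatFunc Fq]
        (IntermediateField.adjoin (RatFunc Fq) {lam}))
        = (τ : (IntermediateField.adjoin (RatFunc Fq) {lam}) →ₐ[RatFunc Fq]
        (IntermediateField.adjoin (RatFunc Fq) {lam})) :=
      PowerBasis.algHom_ext (IntermediateField.adjoin.powerBasis hint) hgeneq
    exact AlgEquiv.ext fun x => DFunLike.congr_fun halg x
  have hcardU : Fintype.card (Polynomial Fq ⧸ Ideal.span ({p} : Set (Polynomial Fq)))ˣ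
      = Fintype.card Fq ^ p.natDegree - 1 := by
    rw [Fintype.card_units, hcardF]
  have hbij : Function.Bijective θ :=
    (Fintype.bijective_iff_injective_and_card θ).mpr ⟨hθ_inj, by rw [hcardGal, hcardU]⟩
  refine ⟨⟨MulEquiv.ofBijective θ hbij⟩, ?_, ?_⟩
  · exact isCyclic_of_surjective (MulEquiv.ofBijective θ hbij).symm
      (MulEquiv.ofBijective θ hbij).symm.surjective
  · rw [Nat.card_eq_fintype_card, hcardGal]
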